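/- Let I ≥ 2 be an integer, c > 0, and ω_i, μ_i, M_i > 0 for i = 2, ..., I. Let 0 = z_1 < z_2 < ... < z_I and let p : [0, z_I] → ℝ be continuous with p(z_I) = 0, such that on each interval [z_{i−1}, z_i] for i = 2, ..., I the function p is affine with slope −c/μ_i, and ∫_{z_{i−1}}^{z_i} p(z) dz = ω_i M_i for i = 2, ..., I. Then the interface points are given explicitly by: z_2 = (μ_2/c) ( sqrt(2 c Σ_{j=2}^I (ω_j/μ_j) M_j) − sqrt(2 c Σ_{j=3}^I (ω_j/μ_j) M_j) ); z_i = z_{i−1} + (μ_i/c) ( sqrt(2 c Σ_{j=i}^I (ω_j/μ_j) M_j) − sqrt(2 c Σ_{j=i+1}^I (ω_j/μ_j) M_j) ) for i = 3, ..., I−1; and z_I = z_{I−1} + sqrt(2 ω_I μ_I M_I / c). -/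

import Mathlib

open Set

/-- For the piecewise-affine travelling-wave pressure ahead of
the proliferating region (continuous, slope `−c/μ_i` on `[z_{i−1}, z_i]`,
vanishing at `z_I`, mass `ω_i M_i` on the `i`-th segment), the interface
points `z_2, …, z_I` are given explicitly in terms of `c`, `ω_i`, `μ_i`,
and `M_i`. -/
lemma aux_integral (a b C s : ℝ) :
    (∫ x in a..b, (C + s * (b - x))) = C*(b-a) + s/2*(b-a)^2 := by
  have h1 : ∀ x:ℝ, C + s*(b-x) = (C + s*b) + (-s)*x := by intro x; ring
  simp only [h1]
  rw [intervalIntegral.integral_add intervalIntegrable_const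
        ((by continuity : Continuous fun x:ℝ => -s*x).intervalIntegrable a b),
      intervalIntegral.integral_const, intervalIntegral.integral_const_mul,
      integral_id]
  simp [smul_eq_mul]; ring

theorem stmt10
    (I : ℕ) (hI : 2 ≤ I)
    (c : ℝ) (hc : 0 < c)
    (ω μ M : ℕ → ℝ)
    (hω : ∀ i, 2 ≤ i → i ≤ I → 0 < ω i)
    (hμ : ∀ i, 2 ≤ i → i ≤ I → 0 < μ i)
    (hM : ∀ i, 2 ≤ i → i ≤ I → 0 < M i)
    (z : ℕ → ℝ) (hz1 : z 1 = 0)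
    (hzmono : ∀ i, 1 ≤ i → i < I → z i < z (i + 1))
    (p : ℝ → ℝ)
    (hpc : ContinuousOn p (Icc 0 (z I)))
    (hpzI : p (z I) = 0)
    (haff : ∀ i, 2 ≤ i → i ≤ I →
      ∀ x ∈ Icc (z (i - 1)) (z i), p x = p (z i) + c / μ i * (z i - x))
    (hmass : ∀ i, 2 ≤ i → i ≤ I →
      ∫ x in (z (i - 1))..(z i), p x = ω i * M i) :
    z 2 = μ 2 / c *
        (Real.sqrt (2 * c * ∑ j ∈ Finset.Icc 2 I, ω j / μ j * M j)
          - Real.sqrt (2 * c * ∑ j ∈ Finset.Icc 3 I, ω j / μ j * M j)) ∧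
    (∀ i, 3 ≤ i → i ≤ I - 1 →
      z i = z (i - 1) + μ i / c *
        (Real.sqrt (2 * c * ∑ j ∈ Finset.Icc i I, ω j / μ j * M j)
          - Real.sqrt (2 * c * ∑ j ∈ Finset.Icc (i + 1) I, ω j / μ j * M j))) ∧
    z I = z (I - 1) + Real.sqrt (2 * ω I * μ I * M I / c) := by
  set S : ℕ → ℝ := fun i => ∑ j ∈ Finset.Icc i I, ω j / μ j * M j with hS
  -- Monotonicity across one segment
  have hzlt : ∀ i, 2 ≤ i → i ≤ I → z (i-1) < z i := by
    intro i h2 hiI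
    have := hzmono (i-1) (by omega) (by omega)
    rwa [show i - 1 + 1 = i by omega] at this
  -- key segment relations
  have key : ∀ i, 2 ≤ i → i ≤ I →
      p (z (i-1)) = p (z i) + c / μ i * (z i - z (i-1)) ∧
      p (z i) * (z i - z (i-1)) + c / μ i / 2 * (z i - z (i-1))^2 = ω i * M i := by
    intro i h2 hiI
    have hlt := hzlt i h2 hiI
    constructor
    · exact haff i h2 hiI (z (i-1)) ⟨le_refl _, hlt.le⟩
    · have hcongr : (∫ x in (z (i-1))..(z i), p x)
          = ∫ x in (z (i-1))..(z i), (p (z i) + c / μ i * (z i - x)) := by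
        apply intervalIntegral.integral_congr
        intro x hx
        rw [uIcc_of_le hlt.le] at hx
        exact haff i h2 hiI x hx
      have := hmass i h2 hiI
      rw [hcongr, aux_integral] at this
      linarith [this]
  -- S facts
  have hSempty : ∀ i, I < i → S i = 0 := by
    intro i h; simp [hS, Finset.Icc_eq_empty (by omega : ¬ i ≤ I)]
  have hSrec : ∀ i, i ≤ I → S i = ω i / μ i * M i + S (i+1) := by
    intro i h
    simp only [hS]
    rw [Finset.Icc_eq_cons_Ioc h, Finset.sum_cons, Finset.Icc_add_one_left_eq_Ioc]
  -- nonnegativity and square identity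
  have main : ∀ d i, i + d = I → 1 ≤ i → 0 ≤ p (z i) ∧ (p (z i))^2 = 2 * c * S (i+1) := by
    intro d
    induction d with
    | zero =>
      intro i hiI _
      have : i = I := by omega
      rw [this, hpzI, hSempty (I+1) (by omega)]
      norm_num
    | succ d ih =>
      intro i hiI h1
      obtain ⟨ihnn, ihsq⟩ := ih (i+1) (by omega) (by omega)
      have h2 : 2 ≤ i + 1 := by omega
      have hiI' : i + 1 ≤ I := by omega
      obtain ⟨ha, hm⟩ := key (i+1) h2 hiI'
      rw [show i + 1 - 1 = i by omega] at ha hm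
      have hmu := hμ (i+1) h2 hiI'
      have hL : 0 < z (i+1) - z i := by
        have := hzmono i h1 (by omega); linarith
      constructor
      · rw [ha]
        have : 0 < c / μ (i+1) * (z (i+1) - z i) := by positivity
        linarith
      · rw [ha, hSrec (i+1) hiI']
        linear_combination ihsq + (2*c/μ (i+1)) * hm
  have main' : ∀ i, 1 ≤ i → i ≤ I → p (z i) = Real.sqrt (2 * c * S (i+1)) := by
    intro i h1 hiI
    obtain ⟨hnn, hsq⟩ := main (I - i) i (by omega) h1
    rw [← hsq, Real.sqrt_sq hnn]
  -- general formula
  have G : ∀ i, 2 ≤ i → i ≤ I →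
      z i = z (i-1) + μ i / c * (Real.sqrt (2*c*S i) - Real.sqrt (2*c*S (i+1))) := by
    intro i h2 hiI
    obtain ⟨ha, _⟩ := key i h2 hiI
    have e1 := main' (i-1) (by omega) (by omega)
    rw [show i - 1 + 1 = i by omega] at e1
    have e2 := main' i (by omega) hiI
    rw [e1, e2] at ha
    have hmu := hμ i h2 hiI
    have hcn : c ≠ 0 := ne_of_gt hc
    have hmn : μ i ≠ 0 := ne_of_gt hmu
    field_simp at ha ⊢
    linarith [ha]
  refine ⟨?_, ?_, ?_⟩
  · have := G 2 le_rfl hI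
    simpa [hz1] using this
  · intro i h3 hiI1
    exact G i (by omega) (by omega)
  · have := G I hI le_rfl
    rw [hSempty (I+1) (by omega)] at this
    have hSI : S I = ω I / μ I * M I := by
      simp [hS]
    rw [hSI] at this
    rw [this]
    congr 1
    have hmu := hμ I (by omega) le_rfl
    have hom := hω I (by omega) le_rfl
    have hMm := hM I (by omega) le_rfl
    rw [mul_zero, Real.sqrt_zero, sub_zero,
        show (2 * ω I * μ I * M I / c) = (μ I / c)^2 * (2*c*(ω I / μ I * M I)) by
          field_simp,
        Real.sqrt_mul (sq_nonneg _), Real.sqrt_sq (by positivity)]
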